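/- Let X₁, …, X_n (n ≥ 2) be i.i.d. random variables with law μ, a Borel probability measure supported on a compact set K ⊆ ℂ, and set P_n(z) = ∏_{i=1}^n (z − X_i). Fix C_n > 0 and let A = {|X_i − X_j| > 1/C_n for all i ≠ j}, and assume ℙ(A) > 0. Then for every 2 ≤ k ≤ n − 1, the conditional expectation satisfies E[ (1/k!)·|P_n^{(k)}(X₁)/P_n′(X₁)| | A ] ≤ binom(n−1, k−1)·C_n^{k−1}. -/

import Mathlib

open MeasureTheory Filter Polynomial Metric Set
open scoped Classical ENNReal NNReal Topology ProbabilityTheory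

noncomputable section

/-- The logarithmic potential `U_μ(z) = ∫ log|z-w| dμ(w)`, valued in `[-∞, ∞)` (as an `EReal`),
defined as the difference of the positive and negative parts. -/
def logPotential (μ : Measure ℂ) (z : ℂ) : EReal :=
  ((∫⁻ w, ENNReal.ofReal (Real.log ‖z - w‖) ∂μ : ℝ≥0∞) : EReal)
    - ((∫⁻ w, ENNReal.ofReal (-Real.log ‖z - w‖) ∂μ : ℝ≥0∞) : EReal)

/-- The logarithmic energy `I(μ) = ∫∫ log|z-w| dμ(z) dμ(w)`, valued in `EReal`. -/
def energy (μ : Measure ℂ) : EReal :=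
  ((∫⁻ q : ℂ × ℂ, ENNReal.ofReal (Real.log (‖q.1 - q.2‖)) ∂(μ.prod μ) : ℝ≥0∞) : EReal)
    - ((∫⁻ q : ℂ × ℂ, ENNReal.ofReal (-Real.log (‖q.1 - q.2‖)) ∂(μ.prod μ) : ℝ≥0∞) : EReal)

/-- Borel probability measures supported on `K`. -/
def probOn (K : Set ℂ) : Set (Measure ℂ) :=
  {μ | IsProbabilityMeasure μ ∧ μ Kᶜ = 0}

/-- `log c(K) = sup {I(μ) : μ ∈ P(K)}`. -/
def logCapacity (K : Set ℂ) : EReal :=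
  ⨆ μ ∈ probOn K, energy μ

/-- The logarithmic capacity `c(K)`, with `c(K) = 0` when the sup of energies is `-∞`. -/
def capacity (K : Set ℂ) : ℝ≥0∞ :=
  (logCapacity K).exp

/-- The filled unit lemniscate `Λ_p = {z : |p(z)| < 1}`. -/
def lemniscate (p : Polynomial ℂ) : Set ℂ := {z | ‖p.eval z‖ < 1}

/-- The number of connected components of a planar set. -/
def numComponents (S : Set ℂ) : ℕ := Nat.card (ConnectedComponents S)

/-- `𝒫_n(K)`: monic polynomials of degree `n` with all zeros in `K`. -/
def monicProdOn (K : Set ℂ) (n : ℕ) : Set (Polynomial ℂ) :=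
  {p | ∃ z : Fin n → ℂ, (∀ j, z j ∈ K) ∧ p = ∏ j, (X - C (z j))}

/-- `𝒞_n(K) = sup {𝒞(Λ_p) : p ∈ 𝒫_n(K)}`. -/
def maxComponents (K : Set ℂ) (n : ℕ) : ℕ :=
  sSup ((fun p => numComponents (lemniscate p)) '' monicProdOn K n)

/-- `M(K) = limsup 𝒞_n(K)/n`. -/
def MK (K : Set ℂ) : ℝ := limsup (fun n : ℕ => (maxComponents K n : ℝ) / n) atTop

/-- `m(K) = liminf 𝒞_n(K)/n`. -/
def mK (K : Set ℂ) : ℝ := liminf (fun n : ℕ => (maxComponents K n : ℝ) / n) atTop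

/-- A bounded Jordan domain: a bounded open connected set whose boundary is the image of an
injective continuous map from the unit circle. -/
def IsJordanDomain (Ω : Set ℂ) : Prop :=
  IsOpen Ω ∧ IsConnected Ω ∧ Bornology.IsBounded Ω ∧
    ∃ γ : (Metric.sphere (0 : ℂ) 1) → ℂ, Continuous γ ∧ Function.Injective γ ∧
      frontier Ω = Set.range γ

/-- A `C²` Jordan arc: the image of an injective `C²` map on `[0,1]` with nowhere-vanishing
derivative. -/
def IsC2JordanArc (A : Set ℂ) : Prop :=
  ∃ γ : ℝ → ℂ, ContDiff ℝ 2 γ ∧ Set.InjOn γ (Set.Icc 0 1) ∧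
    (∀ t ∈ Set.Icc (0 : ℝ) 1, deriv γ t ≠ 0) ∧ A = γ '' Set.Icc 0 1

/-- A bounded Jordan domain with `C²` boundary: bounded, open, connected, whose boundary is
parametrized by a `C²`, `2π`-periodic map, injective on `[0, 2π)`, with nowhere-vanishing
derivative. -/
def IsC2JordanDomain (Ω : Set ℂ) : Prop :=
  IsOpen Ω ∧ IsConnected Ω ∧ Bornology.IsBounded Ω ∧
    ∃ γ : ℝ → ℂ, ContDiff ℝ 2 γ ∧ Function.Periodic γ (2 * Real.pi) ∧
      Set.InjOn γ (Set.Ico 0 (2 * Real.pi)) ∧ (∀ t, deriv γ t ≠ 0) ∧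
      frontier Ω = Set.range γ


section Aux17
open Finset

lemma eval_deriv_prod {n : ℕ} (hn : 0 < n) (a : Fin n → ℂ) :
    ((∏ i, (X - C (a i)) : Polynomial ℂ)).derivative.eval (a ⟨0, hn⟩)
      = ∏ j ∈ univ.erase ⟨0, hn⟩, (a ⟨0, hn⟩ - a j) := by
  classical
  set i0 : Fin n := ⟨0, hn⟩
  have h : (∏ i, (X - C (a i)) : Polynomial ℂ)
      = (X - C (a i0)) * ∏ j ∈ univ.erase i0, (X - C (a j)) :=
    (Finset.mul_prod_erase univ _ (mem_univ i0)).symm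
  rw [h, derivative_mul]
  simp [eval_prod]

lemma eval_iter_deriv_prod {n k : ℕ} (hn : 0 < n) (hk : k ≤ n) (a : Fin n → ℂ) :
    ((Polynomial.derivative^[k] (∏ i, (X - C (a i)) : Polynomial ℂ))).eval (a ⟨0, hn⟩)
      = (k.factorial : ℂ) *
        ∑ T ∈ (univ : Finset (Fin n)).powersetCard (n - k), ∏ i ∈ T, (a ⟨0, hn⟩ - a i) := by
  classical
  set i0 : Fin n := ⟨0, hn⟩
  have h1 : (Polynomial.derivative^[k] (∏ i, (X - C (a i)) : Polynomial ℂ))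
      = k.factorial • Polynomial.hasseDeriv k (∏ i, (X - C (a i))) := by
    rw [← Polynomial.factorial_smul_hasseDeriv]; rfl
  rw [h1, eval_smul, nsmul_eq_mul]
  congr 1
  rw [← Polynomial.taylor_coeff]
  have h2 : Polynomial.taylor (a i0) (∏ i, (X - C (a i)) : Polynomial ℂ)
      = ∏ i, (X + C (a i0 - a i)) := by
    rw [taylor_apply, Polynomial.prod_comp]
    refine Finset.prod_congr rfl fun i _ => ?_
    simp [sub_comp]; ring
  rw [h2, Finset.prod_X_add_C_coeff _ _ (by simpa using hk)]
  simp


lemma key_bound {n k : ℕ} (hn : 2 ≤ n) (hk2 : 2 ≤ k) (hkn : k ≤ n - 1) {Cb : ℝ} (hC : 0 < Cb)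
    (a : Fin n → ℂ) (hnn : 0 < n)
    (ha : ∀ j : Fin n, j ≠ ⟨0, hnn⟩ → 1 / Cb < ‖a ⟨0, hnn⟩ - a j‖) :
    (1 / (k.factorial : ℝ)) *
      (‖(Polynomial.derivative^[k] (∏ i, (X - C (a i)) : Polynomial ℂ)).eval (a ⟨0, hnn⟩)‖ /
        ‖(∏ i, (X - C (a i)) : Polynomial ℂ).derivative.eval (a ⟨0, hnn⟩)‖)
      ≤ ((n - 1).choose (k - 1) : ℝ) * Cb ^ (k - 1) := by
  classical
  set i0 : Fin n := ⟨0, hnn⟩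
  set E : Finset (Fin n) := univ.erase i0 with hE
  have hcardE : E.card = n - 1 := by
    rw [hE, Finset.card_erase_of_mem (mem_univ i0), Finset.card_univ, Fintype.card_fin]
  -- denominator
  have hDval := eval_deriv_prod hnn a
  set D : ℂ := ∏ j ∈ E, (a i0 - a j) with hD
  have habs : ∀ j ∈ E, 1 / Cb < ‖a i0 - a j‖ := by
    intro j hj
    exact ha j (Finset.ne_of_mem_erase hj)
  have hDpos : 0 < ‖D‖ := by
    rw [hD, norm_prod]
    refine Finset.prod_pos fun j hj => lt_trans (by positivity) (habs j hj)
  -- numerator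
  have hNval := eval_iter_deriv_prod hnn (by omega : k ≤ n) a
  -- restrict the sum
  set S : ℂ := ∑ T ∈ E.powersetCard (n - k), ∏ i ∈ T, (a i0 - a i) with hS
  have hsum : (∑ T ∈ (univ : Finset (Fin n)).powersetCard (n - k), ∏ i ∈ T, (a i0 - a i)) = S := by
    rw [hS]
    refine (Finset.sum_subset (Finset.powersetCard_mono (Finset.erase_subset _ _)) ?_).symm
    intro T hT hT'
    rw [Finset.mem_powersetCard] at hT hT'
    have h0 : i0 ∈ T := by
      by_contra h0
      exact hT' ⟨fun x hx => Finset.mem_erase.2 ⟨fun he => h0 (he ▸ hx), mem_univ x⟩, hT.2⟩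
    exact Finset.prod_eq_zero h0 (by simp)
  -- per-term bound
  have hterm : ∀ T ∈ E.powersetCard (n - k),
      ‖∏ i ∈ T, (a i0 - a i)‖ ≤ Cb ^ (k - 1) * ‖D‖ := by
    intro T hT
    rw [Finset.mem_powersetCard] at hT
    obtain ⟨hTE, hTcard⟩ := hT
    have hcard' : (E \ T).card = k - 1 := by
      rw [Finset.card_sdiff_of_subset hTE, hcardE, hTcard]; omega
    have hDsplit : (∏ i ∈ E \ T, (a i0 - a i)) * (∏ i ∈ T, (a i0 - a i)) = D :=
      Finset.prod_sdiff hTE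
    have hlow : (1 / Cb) ^ (k - 1) ≤ ‖∏ i ∈ E \ T, (a i0 - a i)‖ := by
      rw [norm_prod, ← hcard']
      rw [← Finset.prod_const]
      refine Finset.prod_le_prod (fun i _ => by positivity) fun i hi =>
        (habs i (Finset.mem_sdiff.1 hi).1).le
    have hTabs : ‖∏ i ∈ T, (a i0 - a i)‖ * (1 / Cb) ^ (k - 1) ≤ ‖D‖ := by
      calc ‖∏ i ∈ T, (a i0 - a i)‖ * (1 / Cb) ^ (k - 1)
          ≤ ‖∏ i ∈ T, (a i0 - a i)‖ * ‖∏ i ∈ E \ T, (a i0 - a i)‖ :=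
            mul_le_mul_of_nonneg_left hlow (norm_nonneg _)
        _ = ‖D‖ := by rw [← norm_mul, mul_comm, hDsplit]
    have hCpow : (0:ℝ) < (1 / Cb) ^ (k - 1) := by positivity
    calc ‖∏ i ∈ T, (a i0 - a i)‖
        = ‖∏ i ∈ T, (a i0 - a i)‖ * (1 / Cb) ^ (k - 1) * Cb ^ (k - 1) := by
          rw [mul_assoc, ← mul_pow, one_div, inv_mul_cancel₀ hC.ne', one_pow, mul_one]
      _ ≤ ‖D‖ * Cb ^ (k - 1) := by gcongr
      _ = Cb ^ (k - 1) * ‖D‖ := mul_comm _ _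
  -- sum bound
  have hScard : (E.powersetCard (n - k)).card = (n - 1).choose (k - 1) := by
    rw [Finset.card_powersetCard, hcardE, ← Nat.choose_symm (by omega : k - 1 ≤ n - 1)]
    congr 1; omega
  have hSabs : ‖S‖ ≤ ((n - 1).choose (k - 1) : ℝ) * (Cb ^ (k - 1) * ‖D‖) := by
    rw [hS]
    calc ‖∑ T ∈ E.powersetCard (n - k), ∏ i ∈ T, (a i0 - a i)‖
        ≤ ∑ T ∈ E.powersetCard (n - k), ‖∏ i ∈ T, (a i0 - a i)‖ :=
          norm_sum_le _ _
      _ ≤ ∑ _T ∈ E.powersetCard (n - k), Cb ^ (k - 1) * ‖D‖ :=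
          Finset.sum_le_sum hterm
      _ = ((n - 1).choose (k - 1) : ℝ) * (Cb ^ (k - 1) * ‖D‖) := by
          rw [Finset.sum_const, hScard, nsmul_eq_mul]
  -- put together
  rw [hNval, hDval, hsum]
  rw [norm_mul, Complex.norm_natCast]
  have hkfac : (0:ℝ) < (k.factorial : ℝ) := by positivity
  rw [one_div, mul_comm ((k.factorial : ℝ)⁻¹) _, mul_div_assoc, mul_comm, ← mul_assoc,
    inv_mul_cancel₀ (ne_of_gt hkfac), one_mul]
  rw [div_le_iff₀ hDpos]
  calc ‖S‖ ≤ ((n - 1).choose (k - 1) : ℝ) * (Cb ^ (k - 1) * ‖D‖) := hSabs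
    _ = ((n - 1).choose (k - 1) : ℝ) * Cb ^ (k - 1) * ‖D‖ := by ring

end Aux17

/-- For i.i.d. `X₁, …, X_n` with law `μ` on a compact `K`, `P_n = ∏ (z - X_i)`,
and `A = {|X_i - X_j| > 1/C_n ∀ i ≠ j}` of positive probability, for `2 ≤ k ≤ n - 1` one has
`E[(1/k!)|P_n^{(k)}(X₁)/P_n'(X₁)| | A] ≤ binom(n-1, k-1)·C_n^{k-1}`. -/
theorem statement17 {Ωs : Type*} [MeasureSpace Ωs] [IsProbabilityMeasure (ℙ : Measure Ωs)]
    (K : Set ℂ) (hK : IsCompact K) (μ : Measure ℂ) (hμ : μ ∈ probOn K)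
    (n : ℕ) (hn : 2 ≤ n) (Xv : Fin n → Ωs → ℂ) (hmeas : ∀ i, Measurable (Xv i))
    (hindep : ProbabilityTheory.iIndepFun Xv ℙ)
    (hlaw : ∀ i, Measure.map (Xv i) ℙ = μ)
    (Cn : ℝ) (hCn : 0 < Cn)
    (A : Set Ωs)
    (hA : A = {ω | ∀ i j : Fin n, i ≠ j → 1 / Cn < ‖Xv i ω - Xv j ω‖})
    (hApos : 0 < ℙ A) (k : ℕ) (hk2 : 2 ≤ k) (hkn : k ≤ n - 1) :
    (∫ ω in A,
        (1 / (Nat.factorial k : ℝ)) *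
          (‖(Polynomial.derivative^[k]
              (∏ i, (X - Polynomial.C (Xv i ω)) : Polynomial ℂ)).eval (Xv ⟨0, by omega⟩ ω)‖ /
            ‖(∏ i, (X - Polynomial.C (Xv i ω)) : Polynomial ℂ).derivative.eval
              (Xv ⟨0, by omega⟩ ω)‖) ∂ℙ) / (ℙ A).toReal ≤
      (Nat.choose (n - 1) (k - 1) : ℝ) * Cn ^ (k - 1) := by
  classical
  have hnn : 0 < n := by omega
  have hAm : MeasurableSet A := by
    rw [hA]
    have : {ω | ∀ i j : Fin n, i ≠ j → 1 / Cn < ‖Xv i ω - Xv j ω‖}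
        = ⋂ (i : Fin n), ⋂ (j : Fin n), ⋂ (_ : i ≠ j),
            {ω | 1 / Cn < ‖Xv i ω - Xv j ω‖} := by
      ext ω; simp
    rw [this]
    refine MeasurableSet.iInter fun i => MeasurableSet.iInter fun j =>
      MeasurableSet.iInter fun _ => ?_
    exact measurableSet_lt measurable_const ((hmeas i).sub (hmeas j)).norm
  set B : ℝ := (Nat.choose (n - 1) (k - 1) : ℝ) * Cn ^ (k - 1) with hB
  have hbound : ∀ ω ∈ A,
      ‖(1 / (Nat.factorial k : ℝ)) *
          (‖(Polynomial.derivative^[k]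
              (∏ i, (X - Polynomial.C (Xv i ω)) : Polynomial ℂ)).eval (Xv ⟨0, by omega⟩ ω)‖ /
            ‖(∏ i, (X - Polynomial.C (Xv i ω)) : Polynomial ℂ).derivative.eval
              (Xv ⟨0, by omega⟩ ω)‖)‖ ≤ B := by
    intro ω hω
    rw [Real.norm_eq_abs, abs_of_nonneg (by positivity)]
    refine key_bound hn hk2 hkn hCn (fun i => Xv i ω) hnn fun j hj => ?_
    rw [hA] at hω
    exact hω ⟨0, hnn⟩ j (fun h => hj h.symm)
  have hkey := norm_setIntegral_le_of_norm_le_const (μ := ℙ) (s := A)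
    (measure_lt_top ℙ A) hbound
  have hpos : 0 < (ℙ A).toReal := ENNReal.toReal_pos hApos.ne' (measure_ne_top _ _)
  rw [div_le_iff₀ hpos]
  exact le_trans (le_trans (le_abs_self _) hkey) le_rfl
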